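/- Let f₁, f₂ be probability measures on ℝ₊ with finite second moments and equal means, let λ ∈ [0,1], p = λ, q = 1-λ, and η a random variable with E[η]=0, Var(η)=β², independent of everything else. For the gain operator Q⁺(f)(·) = E[law of (p+η)V + qW] where V, W are independent with law f, one has W₂²(Q⁺(f₁), Q⁺(f₂)) ≤ (E[(p+η)²] + q²) W₂²(f₁, f₂). -/

import Mathlib

open MeasureTheory Pointwise

noncomputable def W2sq (f g : Measure ℝ) : ℝ :=
  sInf { c | ∃ π : Measure (ℝ × ℝ), π.map Prod.fst = f ∧ π.map Prod.snd = g ∧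
      c = ∫ p, (p.1 - p.2) ^ 2 ∂π }

noncomputable def gainOp (p q : ℝ) (ν : Measure ℝ) (f : Measure ℝ) : Measure ℝ :=
  Measure.map (fun x : ℝ × ℝ × ℝ => (p + x.1) * x.2.1 + q * x.2.2)
    (ν.prod (f.prod f))

private lemma abs_le_one_add_sq (x : ℝ) : |x| ≤ 1 + x ^ 2 := by
  nlinarith [sq_nonneg (|x| - 1), sq_abs x, abs_nonneg x]

private lemma integrable_of_sq {α : Type*} [MeasurableSpace α] {μ : Measure α}
    [IsProbabilityMeasure μ] {g : α → ℝ} (hg : AEStronglyMeasurable g μ)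
    (h : Integrable (fun a => g a ^ 2) μ) : Integrable g μ :=
  Integrable.mono' ((integrable_const 1).add h) hg
    (Filter.Eventually.of_forall fun a => by
      simpa [Real.norm_eq_abs] using abs_le_one_add_sq (g a))

private lemma coupling_step
    (lam : ℝ) (ν : Measure ℝ) [IsProbabilityMeasure ν]
    (hνint : Integrable (fun s => s ^ 2) ν)
    (f₁ f₂ : Measure ℝ) [IsProbabilityMeasure f₁] [IsProbabilityMeasure f₂]
    (hm1 : Integrable (fun x => x ^ 2) f₁) (hm2 : Integrable (fun x => x ^ 2) f₂)
    (hmean : ∫ x, x ∂f₁ = ∫ x, x ∂f₂)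
    (π : Measure (ℝ × ℝ)) (hπ1 : π.map Prod.fst = f₁) (hπ2 : π.map Prod.snd = f₂) :
    ∃ ρ : Measure (ℝ × ℝ),
      ρ.map Prod.fst = gainOp lam (1 - lam) ν f₁ ∧
      ρ.map Prod.snd = gainOp lam (1 - lam) ν f₂ ∧
      ∫ p, (p.1 - p.2) ^ 2 ∂ρ =
        ((∫ s, (lam + s) ^ 2 ∂ν) + (1 - lam) ^ 2) * ∫ p, (p.1 - p.2) ^ 2 ∂π := by
  have hprob : IsProbabilityMeasure π := by
    refine ⟨?_⟩
    have h := congrArg (fun m : Measure ℝ => m Set.univ) hπ1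
    simpa [Measure.map_apply measurable_fst MeasurableSet.univ] using h
  set q : ℝ := 1 - lam with hqdef
  set φ : ℝ × (ℝ × ℝ) × (ℝ × ℝ) → ℝ × ℝ := fun z =>
    ((lam + z.1) * z.2.1.1 + q * z.2.2.1, (lam + z.1) * z.2.1.2 + q * z.2.2.2) with hφdef
  have hφ : Measurable φ := by fun_prop
  refine ⟨(ν.prod (π.prod π)).map φ, ?_, ?_, ?_⟩
  · rw [Measure.map_map measurable_fst hφ]
    have hcomp : (Prod.fst ∘ φ) =
        (fun x : ℝ × ℝ × ℝ => (lam + x.1) * x.2.1 + q * x.2.2) ∘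
          (Prod.map id (Prod.map Prod.fst Prod.fst)) := rfl
    rw [hcomp, ← Measure.map_map (by fun_prop) (by fun_prop),
      ← Measure.map_prod_map _ _ measurable_id (measurable_fst.prodMap measurable_fst),
      ← Measure.map_prod_map _ _ measurable_fst measurable_fst, hπ1, Measure.map_id]
    rfl
  · rw [Measure.map_map measurable_snd hφ]
    have hcomp : (Prod.snd ∘ φ) =
        (fun x : ℝ × ℝ × ℝ => (lam + x.1) * x.2.1 + q * x.2.2) ∘
          (Prod.map id (Prod.map Prod.snd Prod.snd)) := rfl
    rw [hcomp, ← Measure.map_map (by fun_prop) (by fun_prop),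
      ← Measure.map_prod_map _ _ measurable_id (measurable_snd.prodMap measurable_snd),
      ← Measure.map_prod_map _ _ measurable_snd measurable_snd, hπ2, Measure.map_id]
    rfl
  · -- the integral computation
    set u : ℝ × ℝ → ℝ := fun a => a.1 - a.2 with hudef
    have hs : Integrable (fun s : ℝ => s) ν :=
      integrable_of_sq aestronglyMeasurable_id hνint
    have hI1 : Integrable (fun s => (lam + s) ^ 2) ν := by
      have : (fun s : ℝ => (lam + s) ^ 2) =
          fun s => (lam ^ 2 + (2 * lam) * s) + s ^ 2 := funext fun s => by ring
      rw [this]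
      exact ((integrable_const _).add (hs.const_mul _)).add hνint
    have hsq1 : Integrable (fun a : ℝ × ℝ => a.1 ^ 2) π := by
      have h := integrable_map_measure (μ := π) (f := (Prod.fst : ℝ × ℝ → ℝ))
        (g := fun x : ℝ => x ^ 2)
        (measurable_id.pow_const 2).aestronglyMeasurable measurable_fst.aemeasurable
      rw [hπ1] at h
      exact h.mp hm1
    have hsq2 : Integrable (fun a : ℝ × ℝ => a.2 ^ 2) π := by
      have h := integrable_map_measure (μ := π) (f := (Prod.snd : ℝ × ℝ → ℝ))
        (g := fun x : ℝ => x ^ 2)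
        (measurable_id.pow_const 2).aestronglyMeasurable measurable_snd.aemeasurable
      rw [hπ2] at h
      exact h.mp hm2
    have hu2 : Integrable (fun a => u a ^ 2) π := by
      refine Integrable.mono' ((hsq1.const_mul 2).add (hsq2.const_mul 2))
        ((measurable_fst.sub measurable_snd).pow_const 2).aestronglyMeasurable ?_
      filter_upwards with a
      rw [Real.norm_eq_abs, abs_of_nonneg (sq_nonneg _)]
      simp only [Pi.add_apply, hudef]
      nlinarith [sq_nonneg (a.1 + a.2)]
    have hu : Integrable u π :=
      integrable_of_sq (measurable_fst.sub measurable_snd).aestronglyMeasurable hu2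
    have hx1 : Integrable (fun a : ℝ × ℝ => a.1) π :=
      integrable_of_sq measurable_fst.aestronglyMeasurable hsq1
    have hx2 : Integrable (fun a : ℝ × ℝ => a.2) π :=
      integrable_of_sq measurable_snd.aestronglyMeasurable hsq2
    have hm1' : ∫ a, a.1 ∂π = ∫ x, x ∂f₁ := by
      rw [← hπ1]
      exact (integral_map (f := fun x : ℝ => x) measurable_fst.aemeasurable
        measurable_id.aestronglyMeasurable).symm
    have hm2' : ∫ a, a.2 ∂π = ∫ x, x ∂f₂ := by
      rw [← hπ2]
      exact (integral_map (f := fun x : ℝ => x) measurable_snd.aemeasurable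
        measurable_id.aestronglyMeasurable).symm
    have hu0 : ∫ a, u a ∂π = 0 := by
      simp only [hudef]
      rw [integral_sub hx1 hx2, hm1', hm2', hmean, sub_self]
    have hI3ν : Integrable (fun s => 2 * q * (lam + s)) ν := by
      have : (fun s : ℝ => 2 * q * (lam + s)) =
          fun s => 2 * q * lam + (2 * q) * s := funext fun s => by ring
      rw [this]
      exact (integrable_const _).add (hs.const_mul _)
    set c : ℝ := ∫ p, u p ^ 2 ∂π with hcdef
    -- three integrable product-form terms
    have IT1 : Integrable (fun z : ℝ × (ℝ × ℝ) × (ℝ × ℝ) =>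
        (lam + z.1) ^ 2 * (u z.2.1 ^ 2 * 1)) (ν.prod (π.prod π)) :=
      hI1.mul_prod (hu2.mul_prod (integrable_const 1))
    have IT2 : Integrable (fun z : ℝ × (ℝ × ℝ) × (ℝ × ℝ) =>
        (1 : ℝ) * ((1 : ℝ) * (q ^ 2 * u z.2.2 ^ 2))) (ν.prod (π.prod π)) :=
      (integrable_const 1).mul_prod ((integrable_const 1).mul_prod (hu2.const_mul _))
    have IT3 : Integrable (fun z : ℝ × (ℝ × ℝ) × (ℝ × ℝ) =>
        (2 * q * (lam + z.1)) * (u z.2.1 * u z.2.2)) (ν.prod (π.prod π)) :=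
      hI3ν.mul_prod (hu.mul_prod hu)
    have IT12 : Integrable (fun z : ℝ × (ℝ × ℝ) × (ℝ × ℝ) =>
        (lam + z.1) ^ 2 * (u z.2.1 ^ 2 * 1) +
          (1 : ℝ) * ((1 : ℝ) * (q ^ 2 * u z.2.2 ^ 2))) (ν.prod (π.prod π)) := IT1.add IT2
    have hmap : ∫ p, (p.1 - p.2) ^ 2 ∂((ν.prod (π.prod π)).map φ) =
        ∫ z, ((lam + z.1) ^ 2 * (u z.2.1 ^ 2 * 1) +
          (1 : ℝ) * ((1 : ℝ) * (q ^ 2 * u z.2.2 ^ 2)) +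
          (2 * q * (lam + z.1)) * (u z.2.1 * u z.2.2)) ∂(ν.prod (π.prod π)) := by
      rw [integral_map (f := fun p : ℝ × ℝ => (p.1 - p.2) ^ 2) hφ.aemeasurable
        ((measurable_fst.sub measurable_snd).pow_const 2).aestronglyMeasurable]
      congr 1
      funext z
      simp only [hφdef, hudef]
      ring
    have E0 : ∫ z, ((lam + z.1) ^ 2 * (u z.2.1 ^ 2 * 1) +
          (1 : ℝ) * ((1 : ℝ) * (q ^ 2 * u z.2.2 ^ 2)) +
          (2 * q * (lam + z.1)) * (u z.2.1 * u z.2.2)) ∂(ν.prod (π.prod π)) =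
        (∫ z, (lam + z.1) ^ 2 * (u z.2.1 ^ 2 * 1) ∂(ν.prod (π.prod π))) +
        (∫ z, (1 : ℝ) * ((1 : ℝ) * (q ^ 2 * u z.2.2 ^ 2)) ∂(ν.prod (π.prod π))) +
        (∫ z, (2 * q * (lam + z.1)) * (u z.2.1 * u z.2.2) ∂(ν.prod (π.prod π))) := by
      rw [integral_add IT12 IT3, integral_add IT1 IT2]
    have E1 : ∫ z, (lam + z.1) ^ 2 * (u z.2.1 ^ 2 * 1) ∂(ν.prod (π.prod π)) =
        (∫ s, (lam + s) ^ 2 ∂ν) * c := by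
      rw [integral_prod_mul (μ := ν) (ν := π.prod π) (fun s => (lam + s) ^ 2)
          (fun b : (ℝ × ℝ) × (ℝ × ℝ) => u b.1 ^ 2 * 1),
        integral_prod_mul (μ := π) (ν := π) (fun a => u a ^ 2) (fun _ => (1 : ℝ))]
      simp [hcdef]
    have E2 : ∫ z, (1 : ℝ) * ((1 : ℝ) * (q ^ 2 * u z.2.2 ^ 2)) ∂(ν.prod (π.prod π)) =
        q ^ 2 * c := by
      rw [integral_prod_mul (μ := ν) (ν := π.prod π) (fun _ => (1 : ℝ))
          (fun b : (ℝ × ℝ) × (ℝ × ℝ) => (1 : ℝ) * (q ^ 2 * u b.2 ^ 2)),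
        integral_prod_mul (μ := π) (ν := π) (fun _ => (1 : ℝ))
          (fun a => q ^ 2 * u a ^ 2)]
      simp [hcdef, integral_const_mul]
    have E3 : ∫ z, (2 * q * (lam + z.1)) * (u z.2.1 * u z.2.2) ∂(ν.prod (π.prod π)) =
        0 := by
      rw [integral_prod_mul (μ := ν) (ν := π.prod π) (fun s => 2 * q * (lam + s))
          (fun b : (ℝ × ℝ) × (ℝ × ℝ) => u b.1 * u b.2),
        integral_prod_mul (μ := π) (ν := π) u u, hu0]
      ring
    rw [hmap, E0, E1, E2, E3, hcdef]
    ring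

theorem gain_operator_W2_contraction
    (lam β : ℝ) (hlam0 : 0 ≤ lam) (hlam1 : lam ≤ 1)
    (ν : Measure ℝ) [IsProbabilityMeasure ν]
    (hνmean : ∫ s, s ∂ν = 0) (hνvar : ∫ s, s ^ 2 ∂ν = β ^ 2)
    (hνint : Integrable (fun s => s ^ 2) ν)
    (f₁ f₂ : Measure ℝ) [IsProbabilityMeasure f₁] [IsProbabilityMeasure f₂]
    (hpos1 : ∀ᵐ x ∂f₁, 0 ≤ x) (hpos2 : ∀ᵐ x ∂f₂, 0 ≤ x)
    (hm1 : Integrable (fun x => x ^ 2) f₁) (hm2 : Integrable (fun x => x ^ 2) f₂)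
    (hmean : ∫ x, x ∂f₁ = ∫ x, x ∂f₂) :
    W2sq (gainOp lam (1 - lam) ν f₁) (gainOp lam (1 - lam) ν f₂)
      ≤ ((∫ s, (lam + s) ^ 2 ∂ν) + (1 - lam) ^ 2) * W2sq f₁ f₂ := by
  set K : ℝ := (∫ s, (lam + s) ^ 2 ∂ν) + (1 - lam) ^ 2 with hKdef
  have hKnn : 0 ≤ K :=
    add_nonneg (integral_nonneg fun s => sq_nonneg _) (sq_nonneg _)
  set S₁ : Set ℝ := { c | ∃ π : Measure (ℝ × ℝ), π.map Prod.fst = f₁ ∧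
      π.map Prod.snd = f₂ ∧ c = ∫ p, (p.1 - p.2) ^ 2 ∂π } with hS₁def
  set S₂ : Set ℝ := { c | ∃ π : Measure (ℝ × ℝ),
      π.map Prod.fst = gainOp lam (1 - lam) ν f₁ ∧
      π.map Prod.snd = gainOp lam (1 - lam) ν f₂ ∧
      c = ∫ p, (p.1 - p.2) ^ 2 ∂π } with hS₂def
  have hW1 : W2sq f₁ f₂ = sInf S₁ := rfl
  have hW2 : W2sq (gainOp lam (1 - lam) ν f₁) (gainOp lam (1 - lam) ν f₂) = sInf S₂ := rfl
  have hS₁ne : S₁.Nonempty := by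
    refine ⟨∫ p, (p.1 - p.2) ^ 2 ∂(f₁.prod f₂), f₁.prod f₂, ?_, ?_, rfl⟩
    · simp
    · simp
  have hS₂bdd : BddBelow S₂ := by
    refine ⟨0, fun c hc => ?_⟩
    obtain ⟨π, _, _, rfl⟩ := hc
    exact integral_nonneg fun p => sq_nonneg _
  have hsub : ∀ c ∈ S₁, K * c ∈ S₂ := by
    rintro c ⟨π, h1, h2, rfl⟩
    obtain ⟨ρ, hρ1, hρ2, hρi⟩ := coupling_step lam ν hνint f₁ f₂ hm1 hm2 hmean π h1 h2
    exact ⟨ρ, hρ1, hρ2, hρi.symm⟩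
  rw [hW1, hW2]
  calc sInf S₂ ≤ sInf (K • S₁) := by
        refine csInf_le_csInf hS₂bdd (hS₁ne.smul_set) ?_
        rintro x ⟨c, hc, rfl⟩
        simpa [smul_eq_mul] using hsub c hc
    _ = K * sInf S₁ := by
        rw [Real.sInf_smul_of_nonneg hKnn, smul_eq_mul]
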